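/- Let C ⊆ ℍⁿ_κ be a closed κ-hyperbolically convex set, p ∈ ℍⁿ_κ and u a nonzero Lorentz projection of p into the cone K_C spanned by C. Then the intrinsic κ-projection satisfies P_C(p) = u/√(−κ⟨u,u⟩). -/
import Mathlib


noncomputable section

/-- Lorentzian inner product on ℝ^{n+1}. -/
def lip {n : ℕ} (x y : Fin (n+1) → ℝ) : ℝ :=
  (∑ i : Fin n, x i.castSucc * y i.castSucc) - x (Fin.last n) * y (Fin.last n)

/-- Lorentzian norm (of vectors with nonnegative self-product). -/
def lnorm {n : ℕ} (x : Fin (n+1) → ℝ) : ℝ := Real.sqrt (lip x x)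

/-- Euclidean dot product. -/
def edot {n : ℕ} (x y : Fin (n+1) → ℝ) : ℝ := ∑ i, x i * y i

/-- The matrix J = diag(1,…,1,−1) as a map. -/
def Jm {n : ℕ} (x : Fin (n+1) → ℝ) : Fin (n+1) → ℝ :=
  fun i => if i = Fin.last n then -(x i) else x i

/-- The κ-hyperbolic space form (hyperboloid model). -/
def Hyp {n : ℕ} (κ : ℝ) : Set (Fin (n+1) → ℝ) :=
  {p | lip p p = -1/κ ∧ 0 < p (Fin.last n)}

/-- Inverse hyperbolic cosine. -/
def arcosh (x : ℝ) : ℝ := Real.log (x + Real.sqrt (x^2 - 1))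

/-- Intrinsic distance on the κ-hyperbolic space form. -/
def dH {n : ℕ} (κ : ℝ) (p q : Fin (n+1) → ℝ) : ℝ :=
  (1 / Real.sqrt κ) * arcosh (-(κ * lip p q))

/-- Lorentzian projection onto the tangent space at p. -/
def projT {n : ℕ} (κ : ℝ) (p x : Fin (n+1) → ℝ) : Fin (n+1) → ℝ :=
  x + (κ * lip p x) • p

/-- Logarithm map of the κ-hyperbolic space form. -/
def logH {n : ℕ} (κ : ℝ) (p q : Fin (n+1) → ℝ) : Fin (n+1) → ℝ :=
  (dH κ p q / lnorm (projT κ p q)) • projT κ p q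

/-- Exponential map of the κ-hyperbolic space form. -/
def expH {n : ℕ} (κ : ℝ) (p v : Fin (n+1) → ℝ) : Fin (n+1) → ℝ :=
  Real.cosh (Real.sqrt κ * lnorm v) • p +
    (Real.sinh (Real.sqrt κ * lnorm v) / (Real.sqrt κ * lnorm v)) • v

/-- The cone spanned by a set. -/
def coneOf {n : ℕ} (C : Set (Fin (n+1) → ℝ)) : Set (Fin (n+1) → ℝ) :=
  {x | ∃ t : ℝ, 0 ≤ t ∧ ∃ p ∈ C, x = t • p}

/-- The Lorentz cone. -/
def LorentzCone {n : ℕ} : Set (Fin (n+1) → ℝ) :=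
  {x | lip x x ≤ 0 ∧ 0 ≤ x (Fin.last n)}

/-- The interior of the Lorentz cone. -/
def LorentzConeInt {n : ℕ} : Set (Fin (n+1) → ℝ) :=
  {x | lip x x < 0 ∧ 0 < x (Fin.last n)}


lemma lip_smul_right {n : ℕ} (x y : Fin (n+1) → ℝ) (t : ℝ) :
    lip x (t • y) = t * lip x y := by
  simp only [lip, Pi.smul_apply, smul_eq_mul, mul_sub, Finset.mul_sum]
  congr 1
  · exact Finset.sum_congr rfl fun i _ => by ring
  · ring

lemma lip_smul_left {n : ℕ} (x y : Fin (n+1) → ℝ) (t : ℝ) :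
    lip (t • x) y = t * lip x y := by
  simp only [lip, Pi.smul_apply, smul_eq_mul, mul_sub, Finset.mul_sum]
  congr 1
  · exact Finset.sum_congr rfl fun i _ => by ring
  · ring

lemma lip_sub_right {n : ℕ} (x y z : Fin (n+1) → ℝ) :
    lip x (y - z) = lip x y - lip x z := by
  simp [lip, mul_sub, Finset.sum_sub_distrib]; ring

lemma lip_sub_left {n : ℕ} (x y z : Fin (n+1) → ℝ) :
    lip (x - z) y = lip x y - lip z y := by
  simp [lip, sub_mul, Finset.sum_sub_distrib]; ring

lemma revCS {n : ℕ} {κ : ℝ} (hκ : 0 < κ) {x y : Fin (n+1) → ℝ}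
    (hx : x ∈ Hyp κ) (hy : y ∈ Hyp κ) : lip x y ≤ -1/κ := by
  obtain ⟨hx1, hx2⟩ := hx
  obtain ⟨hy1, hy2⟩ := hy
  set a := x (Fin.last n) with ha
  set b := y (Fin.last n) with hb
  set S := ∑ i : Fin n, x i.castSucc * y i.castSucc with hS
  set A := ∑ i : Fin n, x i.castSucc * x i.castSucc with hA
  set B := ∑ i : Fin n, y i.castSucc * y i.castSucc with hB
  rw [neg_div] at hx1 hy1
  have hAa : A - a * a = -(1/κ) := hx1
  have hBb : B - b * b = -(1/κ) := hy1
  have hA0 : 0 ≤ A := Finset.sum_nonneg fun i _ => mul_self_nonneg _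
  have hB0 : 0 ≤ B := Finset.sum_nonneg fun i _ => mul_self_nonneg _
  have hCS : S ^ 2 ≤ A * B := by
    have h := Finset.sum_mul_sq_le_sq_mul_sq Finset.univ
      (fun i : Fin n => x i.castSucc) (fun i : Fin n => y i.castSucc)
    simpa [hS, hA, hB, pow_two] using h
  have hκ' : 0 < 1/κ := one_div_pos.mpr hκ
  have ha2 : 1/κ ≤ a * a := by nlinarith
  have hb2 : 1/κ ≤ b * b := by nlinarith
  have hab : 1/κ ≤ a * b := by nlinarith [mul_pos hx2 hy2]
  show S - a * b ≤ -1/κ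
  rw [neg_div]
  nlinarith [sq_nonneg (a - b), mul_nonneg (sq_nonneg (a - b)) hκ'.le,
    mul_pos hx2 hy2]

/-- Every nonzero Lorentz projection of p into K_C gives the intrinsic κ-projection:
P_C(p) = u/√(−κ⟨u,u⟩), where P_C(p) is the (unique) maximizer of ⟨p,·⟩ over C. -/
theorem intrinsic_projection_from_lorentz_projection {n : ℕ} (κ : ℝ) (hκ : 0 < κ)
    (C : Set (Fin (n+1) → ℝ)) (hC : C ⊆ Hyp κ) (hCc : IsClosed C)
    (hconv : Convex ℝ (coneOf C))
    (p u : Fin (n+1) → ℝ) (hp : p ∈ Hyp κ) (hu : u ∈ coneOf C) (hu0 : u ≠ 0)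
    (hL : ∀ z ∈ coneOf C, lip (p - u) (z - u) ≤ 0)
    (Pc : Fin (n+1) → ℝ) (hPmem : Pc ∈ C)
    (hPmax : ∀ q ∈ C, lip p q ≤ lip p Pc)
    (hPuniq : ∀ y ∈ C, (∀ q ∈ C, lip p q ≤ lip p y) → y = Pc) :
    Pc = (Real.sqrt (-(κ * lip u u)))⁻¹ • u := by
  obtain ⟨t, ht0, q, hqC, hut⟩ := hu
  have hqH := hC hqC
  have hq0 : q ≠ 0 := by
    intro h
    have := hqH.2
    rw [h] at this
    simp at this
  have ht : 0 < t := by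
    rcases lt_or_eq_of_le ht0 with h | h
    · exact h
    · exfalso; apply hu0; rw [hut, ← h, zero_smul]
  -- u is in the cone, 0 and 2u in the cone
  have h0cone : (0 : Fin (n+1) → ℝ) ∈ coneOf C := ⟨0, le_refl 0, q, hqC, by simp⟩
  have h2cone : (2 : ℝ) • u ∈ coneOf C := by
    refine ⟨2 * t, by positivity, q, hqC, ?_⟩
    rw [hut, smul_smul]
  -- lip (p - u) u = 0
  have key0 : lip (p - u) u = 0 := by
    have h1 := hL 0 h0cone
    have h2 := hL ((2:ℝ) • u) h2cone
    have e1 : lip (p - u) ((0:Fin (n+1) → ℝ) - u) = -(lip (p - u) u) := by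
      rw [lip_sub_right]
      have : lip (p - u) (0 : Fin (n+1) → ℝ) = 0 := by
        have : (0 : Fin (n+1) → ℝ) = (0:ℝ) • (0 : Fin (n+1) → ℝ) := by simp
        rw [this, lip_smul_right]; ring
      rw [this]; ring
    have e2 : lip (p - u) ((2:ℝ) • u - u) = lip (p - u) u := by
      rw [lip_sub_right, lip_smul_right]; ring
    rw [e1] at h1
    rw [e2] at h2
    linarith
  -- for z ∈ C : lip p z ≤ lip u z
  have hzle : ∀ z ∈ C, lip p z ≤ lip u z := by
    intro z hz
    have hzcone : z ∈ coneOf C := ⟨1, zero_le_one, z, hz, (one_smul ℝ z).symm⟩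
    have := hL z hzcone
    rw [lip_sub_right, key0] at this
    have : lip (p - u) z ≤ 0 := by linarith
    rw [lip_sub_left] at this
    linarith
  -- lip p u = lip u u
  have hpu : lip p u = lip u u := by
    have := key0
    rw [lip_sub_left] at this
    linarith
  -- lip u u = t^2 * (-1/κ)
  have huu : lip u u = t * t * (-1/κ) := by
    rw [hut, lip_smul_left, lip_smul_right, hqH.1]; ring
  -- lip p q = t * (-1/κ)
  have hpq : lip p q = t * (-1/κ) := by
    have h1 : lip p u = t * lip p q := by rw [hut, lip_smul_right]
    have h2 : t * lip p q = t * (t * (-1/κ)) := by rw [← h1, hpu, huu]; ring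
    exact mul_left_cancel₀ (ne_of_gt ht) h2
  -- q is the maximizer
  have hqmax : ∀ z ∈ C, lip p z ≤ lip p q := by
    intro z hz
    have h1 := hzle z hz
    have h2 : lip u z = t * lip q z := by rw [hut, lip_smul_left]
    have h3 : lip q z ≤ -1/κ := revCS hκ hqH (hC hz)
    have h4 : t * lip q z ≤ t * (-1/κ) := by
      apply mul_le_mul_of_nonneg_left _ ht.le
      rw [neg_div] at h3 ⊢
      exact h3
    rw [hpq]
    calc lip p z ≤ lip u z := h1
      _ = t * lip q z := h2
      _ ≤ t * (-1/κ) := h4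
  have hqPc : q = Pc := hPuniq q hqC hqmax
  -- compute the scalar
  have hscal : Real.sqrt (-(κ * lip u u)) = t := by
    rw [huu]
    have : -(κ * (t * t * (-1/κ))) = t * t := by field_simp
    rw [this]
    exact Real.sqrt_mul_self ht.le
  rw [hscal, ← hqPc, hut, smul_smul, inv_mul_cancel₀ (ne_of_gt ht), one_smul]
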